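/- Case placement values are distributed as the ROC curve. Let Y : Ω → ℝ be a marker with control survival function S̄(y) = P(Y > y | D = 0) and case survival function S_D(y) = P(Y > y | D = 1). Assume S̄ is continuous and strictly decreasing with range (0,1) as y ranges over ℝ, and assume the conditional distribution of Y given D = 1 has no atoms. Then for every t ∈ (0,1), P(S̄(Y) ≤ t | D = 1) = S_D(S̄⁻¹(t)); that is, the conditional CDF of the placement value U = S̄(Y) among cases equals the ROC curve ROC(t) = S_D(S̄⁻¹(t)). -/

import Mathlib

open MeasureTheory Real Set

/-- Case placement values are distributed as the ROC curve: if the control survival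
function `S̄` of the marker `Y` is continuous, strictly decreasing with range `(0,1)`
(with inverse `Sinv`), and the case distribution of `Y` has no atoms, then the conditional
CDF of the placement value `U = S̄(Y)` among cases at `t` equals `ROC(t) = S_D(S̄⁻¹(t))`. -/
theorem case_placement_values_distributed_as_roc
    {Ω : Type*} [MeasurableSpace Ω] (μ : Measure Ω) [IsProbabilityMeasure μ]
    (D : Set Ω) (hD : MeasurableSet D)
    (hD1 : 0 < μ D) (hD0 : μ D < 1)
    (Y : Ω → ℝ) (hY : Measurable Y)
    (Sbar SD : ℝ → ℝ)
    (hSbar : ∀ y, Sbar y = (μ ({ω | Y ω > y} ∩ Dᶜ)).toReal / (μ Dᶜ).toReal)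
    (hSD : ∀ y, SD y = (μ ({ω | Y ω > y} ∩ D)).toReal / (μ D).toReal)
    (hcont : Continuous Sbar) (hanti : StrictAnti Sbar)
    (hrange : ∀ t ∈ Ioo (0:ℝ) 1, ∃ y, Sbar y = t)
    (hnoatom : ∀ y : ℝ, μ ({ω | Y ω = y} ∩ D) = 0)
    (Sinv : ℝ → ℝ) (hSinv : ∀ t ∈ Ioo (0:ℝ) 1, Sbar (Sinv t) = t) :
    ∀ t ∈ Ioo (0:ℝ) 1,
      (μ ({ω | Sbar (Y ω) ≤ t} ∩ D)).toReal / (μ D).toReal = SD (Sinv t) := by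
  intro t ht
  set y := Sinv t with hy
  have hset : {ω | Sbar (Y ω) ≤ t} = {ω | Y ω ≥ y} := by
    ext ω
    simp only [mem_setOf_eq, ge_iff_le]
    rw [← hSinv t ht, hanti.le_iff_ge]
  have hmeas : μ ({ω | Y ω ≥ y} ∩ D) = μ ({ω | Y ω > y} ∩ D) := by
    have hsplit : {ω | Y ω ≥ y} ∩ D = ({ω | Y ω > y} ∩ D) ∪ ({ω | Y ω = y} ∩ D) := by
      ext ω
      simp only [mem_inter_iff, mem_setOf_eq, mem_union, ge_iff_le]
      constructor
      · rintro ⟨h1, h2⟩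
        rcases lt_or_eq_of_le h1 with h | h
        · exact Or.inl ⟨h, h2⟩
        · exact Or.inr ⟨h.symm, h2⟩
      · rintro (⟨h1, h2⟩ | ⟨h1, h2⟩)
        · exact ⟨le_of_lt h1, h2⟩
        · exact ⟨le_of_eq h1.symm, h2⟩
    rw [hsplit]
    refine le_antisymm ?_ (measure_mono subset_union_left)
    calc μ (({ω | Y ω > y} ∩ D) ∪ ({ω | Y ω = y} ∩ D))
        ≤ μ ({ω | Y ω > y} ∩ D) + μ ({ω | Y ω = y} ∩ D) := measure_union_le _ _
      _ = μ ({ω | Y ω > y} ∩ D) := by rw [hnoatom y, add_zero]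
  rw [hset, hmeas, hSD]
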